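/- Let D = {(p_t, x_t^1,…,x_t^n) : t = 1,…,T} be a multi-agent dataset with p_t ∈ ℝ^m having strictly positive entries and x_t^i ∈ ℝ^m for each agent i ∈ {1,…,n}, and suppose there exist scalars v_t and λ_t^i > 0 satisfying v_τ − v_t − Σ_{i=1}^n λ_t^i p_tᵀ (x_τ^i − x_t^i) ≤ 0 for all t, τ ∈ {1,…,T}. Define V̂(x^1,…,x^n) = min_{t ∈ {1,…,T}} { v_t + Σ_{i=1}^n λ_t^i p_tᵀ (x^i − x_t^i) }. Then: (i) V̂ is concave and continuous on (ℝ^m)^n and strictly increasing in each block x^i; (ii) V̂(x_t^1,…,x_t^n) = v_t for every t; (iii) for every t, the joint response (x_t^1,…,x_t^n) maximizes V̂ over the joint budget set {(x^1,…,x^n) : p_tᵀ x^i ≤ p_tᵀ x_t^i for all i}; and consequently (iv) for every t and every agent i, x_t^i maximizes z ↦ V̂(x_t^1,…,x_t^{i−1}, z, x_t^{i+1},…,x_t^n) over {z ∈ ℝ^m : p_tᵀ z ≤ p_tᵀ x_t^i}, i.e., the data are consistent with a pure-strategy Nash equilibrium of the concave potential game with potential V̂. -/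

import Mathlib

open Finset

/-- Multiagent Afriat Theorem, implication (2) ⟹ (3) ⟹ (1): feasibility of the
multi-agent Afriat inequalities with `λ_t^i > 0` yields the explicitly constructed
concave potential `V̂(x^1,…,x^n) = min_t { v_t + Σ_i λ_t^i p_tᵀ (x^i − x_t^i) }`,
which is concave, continuous, strictly increasing in each block, interpolates the
data (`V̂(x_t) = v_t`), and rationalizes the dataset both as joint maximization of
the potential over the joint budget set and as a pure-strategy Nash equilibrium
(each agent's observed response maximizes `V̂` in its own block over its budget
set). -/
theorem multiagent_afriat_constructed_potential
    (m n T : ℕ) (hT : 0 < T)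
    (p : Fin T → Fin m → ℝ) (hp : ∀ t j, 0 < p t j)
    (x : Fin T → Fin n → Fin m → ℝ)
    (v : Fin T → ℝ) (lam : Fin T → Fin n → ℝ) (hlam : ∀ t i, 0 < lam t i)
    (hAf : ∀ t τ,
      v τ - v t - ∑ i, lam t i * ∑ j, p t j * (x τ i j - x t i j) ≤ 0) :
    let Vhat : (Fin n → Fin m → ℝ) → ℝ := fun y =>
      Finset.univ.inf' ⟨⟨0, hT⟩, Finset.mem_univ _⟩
        (fun t => v t + ∑ i, lam t i * ∑ j, p t j * (y i j - x t i j))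
    ConcaveOn ℝ Set.univ Vhat ∧
    Continuous Vhat ∧
    (∀ (i : Fin n) (y : Fin n → Fin m → ℝ) (z z' : Fin m → ℝ),
      (∀ j, z j ≤ z' j) → z ≠ z' →
      Vhat (Function.update y i z) < Vhat (Function.update y i z')) ∧
    (∀ t, Vhat (x t) = v t) ∧
    (∀ t, ∀ y : Fin n → Fin m → ℝ,
      (∀ i, (∑ j, p t j * y i j) ≤ (∑ j, p t j * x t i j)) →
      Vhat y ≤ Vhat (x t)) ∧
    (∀ t (i : Fin n), ∀ z : Fin m → ℝ,
      (∑ j, p t j * z j) ≤ (∑ j, p t j * x t i j) →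
      Vhat (Function.update (x t) i z) ≤ Vhat (x t)) := by
  intro Vhat
  have hne : (Finset.univ : Finset (Fin T)).Nonempty := ⟨⟨0, hT⟩, Finset.mem_univ _⟩
  set f : Fin T → (Fin n → Fin m → ℝ) → ℝ :=
    fun t y => v t + ∑ i, lam t i * ∑ j, p t j * (y i j - x t i j) with hf
  have hVdef : ∀ y, Vhat y = Finset.univ.inf' hne (fun t => f t y) := fun y => rfl
  have hle : ∀ t y, Vhat y ≤ f t y := fun t y => by
    rw [hVdef]; exact Finset.inf'_le _ (Finset.mem_univ t)
  have hge : ∀ (y) (c : ℝ), (∀ t, c ≤ f t y) → c ≤ Vhat y := fun y c h => by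
    rw [hVdef]; exact Finset.le_inf' _ _ (fun t _ => h t)
  -- data interpolation
  have hdata : ∀ t, Vhat (x t) = v t := by
    intro t
    apply le_antisymm
    · have : f t (x t) = v t := by simp [hf]
      rw [← this]; exact hle t (x t)
    · apply hge
      intro τ
      have h := hAf τ t
      simp only [hf]
      linarith
  -- linearity of f t
  have hlin : ∀ (t : Fin T) (a b : ℝ) (y z : Fin n → Fin m → ℝ), a + b = 1 →
      f t (fun i j => a * y i j + b * z i j) = a * f t y + b * f t z := by
    intro t a b y z hab
    simp only [hf]
    have hin : ∀ i, ∑ j, p t j * ((a * y i j + b * z i j) - x t i j)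
        = a * ∑ j, p t j * (y i j - x t i j) + b * ∑ j, p t j * (z i j - x t i j) := by
      intro i
      rw [Finset.mul_sum, Finset.mul_sum, ← Finset.sum_add_distrib]
      refine Finset.sum_congr rfl fun j _ => ?_
      linear_combination (p t j * x t i j) * hab
    have : ∑ i, lam t i * ∑ j, p t j * ((a * y i j + b * z i j) - x t i j)
        = a * ∑ i, lam t i * ∑ j, p t j * (y i j - x t i j)
          + b * ∑ i, lam t i * ∑ j, p t j * (z i j - x t i j) := by
      rw [Finset.mul_sum, Finset.mul_sum, ← Finset.sum_add_distrib]
      refine Finset.sum_congr rfl fun i _ => ?_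
      rw [hin i]; ring
    rw [this]; linear_combination (-v t) * hab
  refine ⟨?_, ?_, ?_, hdata, ?_, ?_⟩
  -- concavity
  · refine ⟨convex_univ, ?_⟩
    intro y _ z _ a b ha hb hab
    have hsmul : (a • y + b • z) = fun i j => a * y i j + b * z i j := by
      funext i j; simp
    rw [hsmul]
    apply hge
    intro t
    rw [hlin t a b y z hab]
    have h1 : a * Vhat y ≤ a * f t y := mul_le_mul_of_nonneg_left (hle t y) ha
    have h2 : b * Vhat z ≤ b * f t z := mul_le_mul_of_nonneg_left (hle t z) hb
    simp only [smul_eq_mul]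
    linarith
  -- continuity
  · have : Continuous (fun y => Finset.univ.inf' hne (fun t => f t y)) := by
      apply Continuous.finset_inf'_apply hne
      intro t _
      simp only [hf]
      apply continuous_const.add
      apply continuous_finset_sum
      intro i _
      apply Continuous.mul continuous_const
      apply continuous_finset_sum
      intro j _
      exact continuous_const.mul ((((continuous_apply j).comp (continuous_apply i)) : Continuous (fun a : Fin n → Fin m → ℝ => a i j)).sub continuous_const)
    exact this
  -- strict monotonicity in each block
  · intro i y z z' hzz hne'
    have hjex : ∃ j, z j < z' j := by
      by_contra h
      push_neg at h
      exact hne' (funext fun j => le_antisymm (hzz j) (h j))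
    have key : ∀ t, f t (Function.update y i z) < f t (Function.update y i z') := by
      intro t
      simp only [hf]
      have hsum : ∀ w : Fin m → ℝ,
          ∑ i', lam t i' * ∑ j, p t j * (Function.update y i w i' j - x t i' j)
          = lam t i * ∑ j, p t j * (w j - x t i j)
            + ∑ i' ∈ Finset.univ.erase i, lam t i' * ∑ j, p t j * (y i' j - x t i' j) := by
        intro w
        rw [← Finset.add_sum_erase _ _ (Finset.mem_univ i)]
        congr 1
        · simp
        · refine Finset.sum_congr rfl fun i' hi' => ?_
          rw [Function.update_of_ne (Finset.ne_of_mem_erase hi')]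
      rw [hsum z, hsum z']
      have hstrict : ∑ j, p t j * (z j - x t i j) < ∑ j, p t j * (z' j - x t i j) := by
        obtain ⟨j0, hj0⟩ := hjex
        apply Finset.sum_lt_sum
        · intro j _
          have := hzz j
          nlinarith [hp t j]
        · exact ⟨j0, Finset.mem_univ j0, by nlinarith [hp t j0]⟩
      have := hlam t i
      nlinarith
    obtain ⟨t0, _, ht0⟩ := Finset.exists_mem_eq_inf' hne (fun t => f t (Function.update y i z'))
    calc Vhat (Function.update y i z) ≤ f t0 (Function.update y i z) := hle t0 _
      _ < f t0 (Function.update y i z') := key t0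
      _ = Vhat (Function.update y i z') := by rw [hVdef]; exact ht0.symm
  -- joint budget maximization
  · intro t y hy
    have : f t y ≤ v t := by
      simp only [hf]
      have : ∑ i, lam t i * ∑ j, p t j * (y i j - x t i j) ≤ 0 := by
        apply Finset.sum_nonpos
        intro i _
        have hs : ∑ j, p t j * (y i j - x t i j)
            = (∑ j, p t j * y i j) - ∑ j, p t j * x t i j := by
          rw [← Finset.sum_sub_distrib]
          exact Finset.sum_congr rfl fun j _ => by ring
        have h1 : ∑ j, p t j * (y i j - x t i j) ≤ 0 := by rw [hs]; linarith [hy i]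
        exact mul_nonpos_of_nonneg_of_nonpos (hlam t i).le h1
      linarith
    rw [hdata t]
    exact (hle t y).trans this
  -- Nash (per-agent budget maximization)
  · intro t i z hz
    -- reuse joint budget result logic
    have : f t (Function.update (x t) i z) ≤ v t := by
      simp only [hf]
      have : ∑ i', lam t i' * ∑ j, p t j * (Function.update (x t) i z i' j - x t i' j) ≤ 0 := by
        apply Finset.sum_nonpos
        intro i' _
        rcases eq_or_ne i' i with h | h
        · subst h
          simp only [Function.update_self]
          have hs : ∑ j, p t j * (z j - x t i' j)
              = (∑ j, p t j * z j) - ∑ j, p t j * x t i' j := by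
            rw [← Finset.sum_sub_distrib]
            exact Finset.sum_congr rfl fun j _ => by ring
          have h1 : ∑ j, p t j * (z j - x t i' j) ≤ 0 := by rw [hs]; linarith [hz]
          exact mul_nonpos_of_nonneg_of_nonpos (hlam t i').le h1
        · rw [Function.update_of_ne h]
          simp
      linarith
    rw [hdata t]
    exact (hle t _).trans this
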